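/- arXiv:1212.0506 — 2 statements merged into one kernel-verified Lean document; each statement's English description precedes it below -/
import Mathlib

section
/- Let n, m ∈ ℕ and let U be a unitary 2^n × 2^n complex matrix. Suppose there exists a matrix U′ in the Clifford+T group on n+m qubits such that U′(v ⊗ e₀) = (Uv) ⊗ e₀ for all v ∈ ℂ^(2^n), where e₀ ∈ ℂ^(2^m) is the first standard basis vector and ⊗ denotes the Kronecker product. Then every entry of U belongs to the ring 𝔻[ω] = ℤ[1/√2, i]. -/
noncomputable section

/-- The eighth root of unity `ω = e^{iπ/4} = (1+i)/√2`. -/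
def ω : ℂ := (1 + Complex.I) / Real.sqrt 2

/-- A rational number is dyadic if it has the form `a / 2^n` with `a ∈ ℤ`, `n ∈ ℕ`. -/
def IsDyadic (q : ℚ) : Prop := ∃ (a : ℤ) (n : ℕ), q = a / 2 ^ n

/-- Membership in the ring `𝔻[ω] = ℤ[1/√2, i]`: complex numbers of the form
`aω³ + bω² + cω + d` with `a, b, c, d` dyadic rationals. -/
def inDω (t : ℂ) : Prop :=
  ∃ a b c d : ℚ, IsDyadic a ∧ IsDyadic b ∧ IsDyadic c ∧ IsDyadic d ∧
    t = (a : ℂ) * ω ^ 3 + (b : ℂ) * ω ^ 2 + (c : ℂ) * ω + (d : ℂ)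

/-- Membership in the ring `ℤ[ω]`: complex numbers of the form
`aω³ + bω² + cω + d` with `a, b, c, d ∈ ℤ`. -/
def inZω (t : ℂ) : Prop :=
  ∃ a b c d : ℤ, t = (a : ℂ) * ω ^ 3 + (b : ℂ) * ω ^ 2 + (c : ℂ) * ω + (d : ℂ)

/-- The Hadamard gate. -/
def Hmat : Matrix (Fin 2) (Fin 2) ℂ := ((Real.sqrt 2 : ℂ))⁻¹ • !![1, 1; 1, -1]

/-- The phase gate `S`. -/
def Smat : Matrix (Fin 2) (Fin 2) ℂ := !![1, 0; 0, Complex.I]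

/-- The `T` gate. -/
def Tmat : Matrix (Fin 2) (Fin 2) ℂ := !![1, 0; 0, ω]

/-- The `X` (not) gate. -/
def Xmat : Matrix (Fin 2) (Fin 2) ℂ := !![0, 1; 1, 0]

/-- The controlled-not gate, as a matrix on two qubits: it sends `|a,b⟩` to `|a, a+b⟩`. -/
def CNOTmat : Matrix (Fin 2 × Fin 2) (Fin 2 × Fin 2) ℂ :=
  Matrix.of fun p q => if p.1 = q.1 ∧ p.2 = q.1 + q.2 then 1 else 0

/-- The operator obtained by applying the single-qubit gate `G` to the `j`-th of `n` qubits
(and the identity to the remaining factors); this is `P_σ⁻¹ (G ⊗ I) P_σ` written entrywise. -/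
def app1 {n : ℕ} (G : Matrix (Fin 2) (Fin 2) ℂ) (j : Fin n) :
    Matrix (Fin n → Fin 2) (Fin n → Fin 2) ℂ :=
  Matrix.of fun x y => if ∀ i, i ≠ j → x i = y i then G (x j) (y j) else 0

/-- The operator obtained by applying the two-qubit gate `G` to the ordered pair `(j, l)` of
distinct qubits among `n` qubits (and the identity to the remaining factors). -/
def app2 {n : ℕ} (G : Matrix (Fin 2 × Fin 2) (Fin 2 × Fin 2) ℂ) (j l : Fin n) :
    Matrix (Fin n → Fin 2) (Fin n → Fin 2) ℂ :=
  Matrix.of fun x y => if ∀ i, i ≠ j → i ≠ l → x i = y i then G (x j, x l) (y j, y l) else 0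

/-- The Clifford+T group on `n` qubits: the subgroup of the unitary group on `(ℂ²)^{⊗n}`
generated by the scalar `ω`, the gates `H`, `S`, `T` applied to any single qubit, and
CNOT applied to any ordered pair of distinct qubits. -/
def CliffordT (n : ℕ) : Subgroup (Matrix.unitaryGroup (Fin n → Fin 2) ℂ) :=
  Subgroup.closure
    {U | (U : Matrix (Fin n → Fin 2) (Fin n → Fin 2) ℂ)
            = ω • (1 : Matrix (Fin n → Fin 2) (Fin n → Fin 2) ℂ)
      ∨ (∃ j, (U : Matrix (Fin n → Fin 2) (Fin n → Fin 2) ℂ) = app1 Hmat j)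
      ∨ (∃ j, (U : Matrix (Fin n → Fin 2) (Fin n → Fin 2) ℂ) = app1 Smat j)
      ∨ (∃ j, (U : Matrix (Fin n → Fin 2) (Fin n → Fin 2) ℂ) = app1 Tmat j)
      ∨ (∃ j l, j ≠ l ∧ (U : Matrix (Fin n → Fin 2) (Fin n → Fin 2) ℂ) = app2 CNOTmat j l)}

/-- The Kronecker (tensor) product of a vector on `n` qubits with a vector on `m` qubits. -/
def tensorVec {n m : ℕ} (v : (Fin n → Fin 2) → ℂ) (w : (Fin m → Fin 2) → ℂ) :
    (Fin (n + m) → Fin 2) → ℂ :=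
  fun x => v (fun i => x (Fin.castAdd m i)) * w (fun i => x (Fin.natAdd n i))

/-- The first standard basis vector `e₀ = |0⋯0⟩` of `ℂ^(2^m)`. -/
def e0 (m : ℕ) : (Fin m → Fin 2) → ℂ := fun x => if x = fun _ => 0 then 1 else 0

lemma sqrt2_ne : (Real.sqrt 2 : ℂ) ≠ 0 := by norm_cast; positivity
lemma sqrt2_sq : (Real.sqrt 2 : ℂ)^2 = 2 := by
  norm_cast; rw [Real.sq_sqrt]; norm_num
lemma ω_sq : ω^2 = Complex.I := by
  rw [ω, div_pow, sqrt2_sq]; linear_combination (Complex.I_sq)/2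
lemma ω_pow4 : ω^4 = -1 := by
  have h : ω^4 = (ω^2)^2 := by ring
  rw [h, ω_sq, Complex.I_sq]
lemma ω_cube : ω^3 = Complex.I * ω := by
  have h : ω^3 = ω^2 * ω := by ring
  rw [h, ω_sq]
lemma sqrt2_eq : (Real.sqrt 2 : ℂ) = ω - ω^3 := by
  rw [ω_cube, ω]; field_simp; linear_combination sqrt2_sq + Complex.I_sq
lemma star_ω : star ω = -ω^3 := by
  have h : star ω = (1 - Complex.I) / Real.sqrt 2 := by
    rw [ω]; simp [Complex.ext_iff, Complex.div_re, Complex.div_im]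
  rw [h, ω_cube, ω]; field_simp; linear_combination Complex.I_sq

namespace IsDyadic
lemma zero : IsDyadic 0 := ⟨0, 0, by norm_num⟩
lemma one : IsDyadic 1 := ⟨1, 0, by norm_num⟩
lemma add {p q : ℚ} (hp : IsDyadic p) (hq : IsDyadic q) : IsDyadic (p + q) := by
  obtain ⟨a, n, rfl⟩ := hp; obtain ⟨b, m, rfl⟩ := hq
  exact ⟨a * 2 ^ m + b * 2 ^ n, n + m, by push_cast; field_simp; ring_nf⟩
lemma neg {p : ℚ} (hp : IsDyadic p) : IsDyadic (-p) := by
  obtain ⟨a, n, rfl⟩ := hp; exact ⟨-a, n, by push_cast; ring⟩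
lemma mul {p q : ℚ} (hp : IsDyadic p) (hq : IsDyadic q) : IsDyadic (p * q) := by
  obtain ⟨a, n, rfl⟩ := hp; obtain ⟨b, m, rfl⟩ := hq
  exact ⟨a * b, n + m, by push_cast; field_simp; ring_nf⟩
lemma sub {p q : ℚ} (hp : IsDyadic p) (hq : IsDyadic q) : IsDyadic (p - q) := by
  rw [sub_eq_add_neg]; exact hp.add hq.neg
end IsDyadic

lemma inDω_ratCast (q : ℚ) (h : IsDyadic q) : inDω (q : ℂ) :=
  ⟨0, 0, 0, q, IsDyadic.zero, IsDyadic.zero, IsDyadic.zero, h, by push_cast; ring⟩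
lemma inDω_zero : inDω 0 := by simpa using inDω_ratCast 0 IsDyadic.zero
lemma inDω_one : inDω 1 := by simpa using inDω_ratCast 1 IsDyadic.one
lemma inDω_ω : inDω ω :=
  ⟨0, 0, 1, 0, IsDyadic.zero, IsDyadic.zero, IsDyadic.one, IsDyadic.zero, by push_cast; ring⟩
lemma inDω_I : inDω Complex.I :=
  ⟨0, 1, 0, 0, IsDyadic.zero, IsDyadic.one, IsDyadic.zero, IsDyadic.zero, by
    push_cast; rw [← ω_sq]; ring⟩
lemma inDω_invsqrt2 : inDω ((Real.sqrt 2 : ℂ))⁻¹ := by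
  refine ⟨-(1/2), 0, 1/2, 0, ⟨-1, 1, by norm_num⟩, IsDyadic.zero, ⟨1, 1, by norm_num⟩,
    IsDyadic.zero, ?_⟩
  have h : ((-(1/2) : ℚ) : ℂ) * ω ^ 3 + ((0:ℚ):ℂ) * ω ^ 2 + ((1/2 : ℚ) : ℂ) * ω + ((0:ℚ):ℂ)
      = (ω - ω^3) / 2 := by push_cast; ring
  rw [h, ← sqrt2_eq]
  field_simp
  linear_combination (-1) * sqrt2_sq
lemma inDω_add {s t : ℂ} (hs : inDω s) (ht : inDω t) : inDω (s + t) := by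
  obtain ⟨a, b, c, d, ha, hb, hc, hd, rfl⟩ := hs
  obtain ⟨a', b', c', d', ha', hb', hc', hd', rfl⟩ := ht
  exact ⟨a + a', b + b', c + c', d + d', ha.add ha', hb.add hb', hc.add hc', hd.add hd',
    by push_cast; ring⟩
lemma inDω_neg {s : ℂ} (hs : inDω s) : inDω (-s) := by
  obtain ⟨a, b, c, d, ha, hb, hc, hd, rfl⟩ := hs
  exact ⟨-a, -b, -c, -d, ha.neg, hb.neg, hc.neg, hd.neg, by push_cast; ring⟩
lemma inDω_mul {s t : ℂ} (hs : inDω s) (ht : inDω t) : inDω (s * t) := by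
  obtain ⟨a, b, c, d, ha, hb, hc, hd, rfl⟩ := hs
  obtain ⟨a', b', c', d', ha', hb', hc', hd', rfl⟩ := ht
  refine ⟨a*d' + b*c' + c*b' + d*a', b*d' + c*c' + d*b' - a*a', c*d' + d*c' - a*b' - b*a',
    d*d' - a*c' - b*b' - c*a',
    (((ha.mul hd').add (hb.mul hc')).add (hc.mul hb')).add (hd.mul ha'),
    (((hb.mul hd').add (hc.mul hc')).add (hd.mul hb')).sub (ha.mul ha'),
    (((hc.mul hd').add (hd.mul hc')).sub (ha.mul hb')).sub (hb.mul ha'),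
    (((hd.mul hd').sub (ha.mul hc')).sub (hb.mul hb')).sub (hc.mul ha'), ?_⟩
  push_cast
  linear_combination ((a:ℂ)*a'*ω^2 + (a*b' + b*a')*ω + (a*c' + b*b' + c*a')) * ω_pow4
lemma inDω_star {s : ℂ} (hs : inDω s) : inDω (star s) := by
  obtain ⟨a, b, c, d, ha, hb, hc, hd, rfl⟩ := hs
  refine ⟨-c, -b, -a, d, hc.neg, hb.neg, ha.neg, hd, ?_⟩
  simp only [star_add, star_mul, star_pow, star_ratCast, star_ω]
  push_cast
  linear_combination ((a:ℂ)*(-ω^5 + ω) + b*ω^2) * ω_pow4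
lemma inDω_sum {α : Type*} {s : Finset α} {f : α → ℂ} (h : ∀ a ∈ s, inDω (f a)) :
    inDω (∑ a ∈ s, f a) :=
  Finset.sum_induction f inDω (fun _ _ => inDω_add) inDω_zero h


lemma Hmat_mem : ∀ p q : Fin 2, inDω (Hmat p q) := by
  intro p q
  fin_cases p <;> fin_cases q <;>
    simp [Hmat] <;>
    first
      | exact inDω_invsqrt2
      | exact inDω_neg inDω_invsqrt2

lemma Smat_mem : ∀ p q : Fin 2, inDω (Smat p q) := by
  intro p q
  fin_cases p <;> fin_cases q <;> simp [Smat] <;>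
    first
      | exact inDω_one
      | exact inDω_zero
      | exact inDω_I

lemma Tmat_mem : ∀ p q : Fin 2, inDω (Tmat p q) := by
  intro p q
  fin_cases p <;> fin_cases q <;> simp [Tmat] <;>
    first
      | exact inDω_one
      | exact inDω_zero
      | exact inDω_ω

lemma CNOTmat_mem : ∀ p q : Fin 2 × Fin 2, inDω (CNOTmat p q) := by
  intro p q
  rw [CNOTmat, Matrix.of_apply]
  split_ifs
  · exact inDω_one
  · exact inDω_zero

/-- The subgroup of the unitary group consisting of matrices with entries in `𝔻[ω]`. -/
def goodGroup (N : ℕ) : Subgroup (Matrix.unitaryGroup (Fin N → Fin 2) ℂ) where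
  carrier := {U | ∀ i j, inDω ((U : Matrix (Fin N → Fin 2) (Fin N → Fin 2) ℂ) i j)}
  one_mem' := by
    intro i j
    show inDω ((1 : Matrix (Fin N → Fin 2) (Fin N → Fin 2) ℂ) i j)
    rw [Matrix.one_apply]
    split_ifs
    · exact inDω_one
    · exact inDω_zero
  mul_mem' := by
    intro A B hA hB i j
    show inDω (((A : Matrix (Fin N → Fin 2) (Fin N → Fin 2) ℂ) * B) i j)
    rw [Matrix.mul_apply]
    exact inDω_sum fun k _ => inDω_mul (hA i k) (hB k j)
  inv_mem' := by
    intro A hA i j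
    show inDω ((star (A : Matrix (Fin N → Fin 2) (Fin N → Fin 2) ℂ)) i j)
    rw [Matrix.star_apply]
    exact inDω_star (hA j i)

lemma cliffordT_entries {N : ℕ} {U : Matrix.unitaryGroup (Fin N → Fin 2) ℂ}
    (hU : U ∈ CliffordT N) :
    ∀ i j, inDω ((U : Matrix (Fin N → Fin 2) (Fin N → Fin 2) ℂ) i j) := by
  have hle : CliffordT N ≤ goodGroup N := by
    rw [CliffordT, Subgroup.closure_le]
    rintro V (hV | ⟨j, hV⟩ | ⟨j, hV⟩ | ⟨j, hV⟩ | ⟨j, l, hjl, hV⟩) <;> intro x y <;> rw [hV]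
    · rw [Matrix.smul_apply, Matrix.one_apply, smul_ite, smul_eq_mul, mul_one, smul_zero]
      split_ifs
      · exact inDω_ω
      · exact inDω_zero
    · rw [app1, Matrix.of_apply]
      split_ifs
      · exact Hmat_mem _ _
      · exact inDω_zero
    · rw [app1, Matrix.of_apply]
      split_ifs
      · exact Smat_mem _ _
      · exact inDω_zero
    · rw [app1, Matrix.of_apply]
      split_ifs
      · exact Tmat_mem _ _
      · exact inDω_zero
    · rw [app2, Matrix.of_apply]
      split_ifs
      · exact CNOTmat_mem _ _
      · exact inDω_zero
  exact hle hU

/-- If a unitary `2^n × 2^n` matrix `U` is implemented by a Clifford+T operator on `n+m`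
qubits with `m` ancillas initialized and finalized in state `|0⟩`, then every entry of `U`
belongs to the ring `𝔻[ω] = ℤ[1/√2, i]`. -/
theorem stmt0 (n m : ℕ) (U : Matrix (Fin n → Fin 2) (Fin n → Fin 2) ℂ)
    (hU : U ∈ Matrix.unitaryGroup (Fin n → Fin 2) ℂ)
    (h : ∃ U' ∈ CliffordT (n + m), ∀ v : (Fin n → Fin 2) → ℂ,
      Matrix.mulVec (U' : Matrix (Fin (n + m) → Fin 2) (Fin (n + m) → Fin 2) ℂ)
          (tensorVec v (e0 m))
        = tensorVec (U.mulVec v) (e0 m)) :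
    ∀ i j, inDω (U i j) := by
  intro i j
  obtain ⟨U', hU', hUv⟩ := h
  have hent := cliffordT_entries hU'
  set ej : (Fin n → Fin 2) → ℂ := fun x => if x = j then 1 else 0 with hej
  set x₀ : Fin (n + m) → Fin 2 := Fin.append i (fun _ => 0) with hx₀
  set y₀ : Fin (n + m) → Fin 2 := Fin.append j (fun _ => 0) with hy₀
  have hx1 : (fun k => x₀ (Fin.castAdd m k)) = i := by
    funext k; exact Fin.append_left _ _ k
  have hx2 : (fun k => x₀ (Fin.natAdd n k)) = fun _ => 0 := by
    funext k; exact Fin.append_right _ _ k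
  have hR : tensorVec (U.mulVec ej) (e0 m) x₀ = U i j := by
    rw [tensorVec, hx1, hx2, e0]
    simp [Matrix.mulVec, dotProduct, hej, mul_ite, mul_one, mul_zero, Finset.sum_ite_eq']
  have hT : tensorVec ej (e0 m) = fun y => if y = y₀ then 1 else 0 := by
    funext y
    rw [tensorVec, e0, hej]
    by_cases h1 : (fun k => y (Fin.castAdd m k)) = j
    · by_cases h2 : (fun k => y (Fin.natAdd n k)) = fun _ => 0
      · have hyy : y = y₀ := by
          funext k
          refine Fin.addCases (fun p => ?_) (fun p => ?_) k
          · rw [hy₀, Fin.append_left]; exact congrFun h1 p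
          · rw [hy₀, Fin.append_right]; exact congrFun h2 p
        rw [hyy] at h1 h2
        simp [hyy, h1, h2]
      · have hyy : y ≠ y₀ := by
          intro hc
          apply h2
          funext k
          rw [hc, hy₀, Fin.append_right]
        simp [hyy, h2]
    · have hyy : y ≠ y₀ := by
        intro hc
        apply h1
        funext k
        rw [hc, hy₀, Fin.append_left]
      simp [hyy, h1]
  have key := congrFun (hUv ej) x₀
  rw [hR, hT] at key
  have hL : Matrix.mulVec (U' : Matrix (Fin (n + m) → Fin 2) (Fin (n + m) → Fin 2) ℂ)
      (fun y => if y = y₀ then 1 else 0) x₀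
      = (U' : Matrix (Fin (n + m) → Fin 2) (Fin (n + m) → Fin 2) ℂ) x₀ y₀ := by
    simp [Matrix.mulVec, dotProduct, mul_ite, mul_one, mul_zero, Finset.sum_ite_eq']
  rw [hL] at key
  rw [← key]
  exact hent x₀ y₀
end
end

section
/- Let u ∈ 𝔻[ω]^n be a vector. If ‖u‖² = Σ_j |u_j|² is an integer, then weight(u)² = ‖u‖², where weight(u)² = Σ_j weight(u_j)². -/
noncomputable section

lemma omega_re : ω.re = Real.sqrt 2 / 2 := by
  simp [ω, Complex.div_re, Complex.normSq_apply]
lemma omega_im : ω.im = Real.sqrt 2 / 2 := by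
  simp [ω, Complex.div_im, Complex.normSq_apply]

lemma key (a b c d : ℚ) : Complex.normSq ((a:ℂ)*ω^3 + b*ω^2 + c*ω + d) =
    ((a^2+b^2+c^2+d^2 : ℚ):ℝ) + Real.sqrt 2 * ((a*b+b*c+c*d-d*a : ℚ):ℝ) := by
  have hs : (Real.sqrt 2) * (Real.sqrt 2) = 2 := Real.mul_self_sqrt (by norm_num)
  have hs0 : Real.sqrt 2 ≠ 0 := by positivity
  simp only [Complex.normSq_apply, Complex.add_re, Complex.add_im, Complex.mul_re,
    Complex.mul_im, Complex.ratCast_re, Complex.ratCast_im, pow_succ, pow_zero, one_mul,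
    omega_re, omega_im]
  push_cast
  field_simp
  ring_nf
  rw [show Real.sqrt 2 ^ 2 = 2 from Real.sq_sqrt (by norm_num)]
  have h2 : Real.sqrt 2 ^ 2 = 2 := Real.sq_sqrt (by norm_num)
  have h3 : Real.sqrt 2 ^ 3 = 2 * Real.sqrt 2 := by
    rw [show (3:ℕ) = 2 + 1 by norm_num, pow_succ, h2]
  have h4 : Real.sqrt 2 ^ 4 = 4 := by
    rw [show (4:ℕ) = 3 + 1 by norm_num, pow_succ, h3, mul_assoc, hs]; norm_num
  have h5 : Real.sqrt 2 ^ 5 = 4 * Real.sqrt 2 := by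
    rw [show (5:ℕ) = 4 + 1 by norm_num, pow_succ, h4]
  have h6 : Real.sqrt 2 ^ 6 = 8 := by
    rw [show Real.sqrt 2 ^ 6 = Real.sqrt 2 ^ 5 * Real.sqrt 2 from pow_succ _ _, h5, mul_assoc, hs]; norm_num
  simp only [h3, h4, h5, h6]
  ring

/-- If `u ∈ 𝔻[ω]^n` (with `u_j = a_jω³ + b_jω² + c_jω + d_j`, coefficients dyadic) and
`‖u‖² = Σ_j |u_j|²` is an integer `N`, then `weight(u)² = Σ_j (a_j²+b_j²+c_j²+d_j²) = N`. -/
theorem stmt2 (n : ℕ) (u : Fin n → ℂ) (a b c d : Fin n → ℚ)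
    (hdy : ∀ j, IsDyadic (a j) ∧ IsDyadic (b j) ∧ IsDyadic (c j) ∧ IsDyadic (d j))
    (hu : ∀ j, u j = (a j : ℂ) * ω ^ 3 + (b j : ℂ) * ω ^ 2 + (c j : ℂ) * ω + (d j : ℂ))
    (N : ℤ) (hN : ∑ j, Complex.normSq (u j) = (N : ℝ)) :
    ∑ j, ((a j) ^ 2 + (b j) ^ 2 + (c j) ^ 2 + (d j) ^ 2) = (N : ℚ) := by
  set S : ℚ := ∑ j, ((a j) ^ 2 + (b j) ^ 2 + (c j) ^ 2 + (d j) ^ 2) with hS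
  set T : ℚ := ∑ j, ((a j)*(b j) + (b j)*(c j) + (c j)*(d j) - (d j)*(a j)) with hT
  have hmain : (S:ℝ) + Real.sqrt 2 * (T:ℝ) = (N:ℝ) := by
    rw [← hN]
    simp only [hS, hT]
    push_cast
    rw [Finset.mul_sum, ← Finset.sum_add_distrib]
    apply Finset.sum_congr rfl
    intro j _
    rw [hu j, key]
    push_cast
    ring
  have hT0 : T = 0 := by
    by_contra h
    have : Real.sqrt 2 = ((N - S) / T : ℚ) := by
      have hTr : (T:ℝ) ≠ 0 := by exact_mod_cast h
      push_cast
      field_simp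
      linarith [hmain]
    exact Rat.not_irrational _ (this ▸ irrational_sqrt_two)
  have : (S:ℝ) = (N:ℝ) := by rw [hT0] at hmain; push_cast at hmain; linarith
  exact_mod_cast this
end
end
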